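/- Let A be Hurwitz, and let P solve A P + P Aᵀ + B Bᵀ = 0. Then the unique solution Q of the Lyapunov equation Aᵀ Q + Q A + Cᵀ C + Σ_{k=1}^p M_k P M_k = 0 admits the representation Q = ∫₀^∞ e^{Aᵀτ} Cᵀ C e^{Aτ} dτ + Σ_{k=1}^p ∫₀^∞ ∫₀^∞ (e^{Aᵀτ₁} M_k e^{Aτ₂} B)(e^{Aᵀτ₁} M_k e^{Aτ₂} B)ᵀ dτ₁ dτ₂. -/

import Mathlib

open Matrix MeasureTheory

/-- A real square matrix is Hurwitz if all of its (complex) eigenvalues have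
negative real part. -/
def IsHurwitz {n : ℕ} (A : Matrix (Fin n) (Fin n) ℝ) : Prop :=
  ∀ μ ∈ spectrum ℂ (A.map (algebraMap ℝ ℂ)), μ.re < 0

namespace QOG
open NormedSpace Set Filter Topology
attribute [local instance] Matrix.linftyOpSemiNormedRing Matrix.linftyOpNormedRing
  Matrix.linftyOpNormedAlgebra

variable {n : ℕ}

noncomputable instance matCENorm : ContinuousENorm (Matrix (Fin n) (Fin n) ℝ) := by
  exact SeminormedAddGroup.toContinuousENorm

noncomputable instance matPM : TopologicalSpace.PseudoMetrizableSpace (Matrix (Fin n) (Fin n) ℝ) :=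
  inferInstanceAs (TopologicalSpace.PseudoMetrizableSpace (Fin n → Fin n → ℝ))

lemma poly_exp_bound (K : ℕ) {δ : ℝ} (hδ : 0 < δ) :
    ∃ C : ℝ, 0 ≤ C ∧ ∀ t : ℝ, 0 ≤ t → (1 + t) ^ K * Real.exp (-δ * t) ≤ C := by
  have gten : Tendsto (fun t : ℝ => δ * (1 + t)) atTop atTop := by
    apply Tendsto.const_mul_atTop hδ
    exact tendsto_atTop_add_const_left _ _ tendsto_id
  have hcomp := (Real.tendsto_pow_mul_exp_neg_atTop_nhds_zero K).comp gten
  have hten : Tendsto (fun t : ℝ => (1 + t) ^ K * Real.exp (-δ * t)) atTop (𝓝 0) := by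
    have h2 := hcomp.const_mul (δ⁻¹ ^ K * Real.exp δ)
    rw [mul_zero] at h2
    refine h2.congr fun t => ?_
    simp only [Function.comp_apply]
    rw [mul_pow, show -(δ * (1 + t)) = -δ + -δ * t by ring, Real.exp_add]
    rw [show Real.exp (-δ) = (Real.exp δ)⁻¹ by rw [Real.exp_neg]]
    field_simp
    ring_nf; simp [← mul_pow, hδ.ne']
  have hev : ∀ᶠ t : ℝ in atTop, (1 + t) ^ K * Real.exp (-δ * t) < 1 :=
    hten.eventually_lt_const one_pos
  obtain ⟨T, hT⟩ := hev.exists_forall_of_atTop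
  set T' := max T 0 with hT'
  have hcont : Continuous fun t : ℝ => (1 + t) ^ K * Real.exp (-δ * t) := by continuity
  obtain ⟨x0, _, hx0⟩ := (isCompact_Icc (a := (0:ℝ)) (b := T')).exists_isMaxOn
    ⟨0, by simp [hT', le_max_right]⟩ hcont.continuousOn
  refine ⟨max ((1 + x0) ^ K * Real.exp (-δ * x0)) 1, by positivity, fun t ht => ?_⟩
  rcases le_or_gt t T' with h | h
  · exact le_trans (hx0 ⟨ht, h⟩) (le_max_left _ _)
  · exact le_trans (hT t (le_trans (le_max_left T 0) h.le)).le (le_max_right _ _)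

/-- `mulVec` by a fixed vector, as a continuous linear map in the matrix. -/
noncomputable def mvCLM (v : Fin n → ℂ) :
    Matrix (Fin n) (Fin n) ℂ →L[ℂ] (Fin n → ℂ) :=
  LinearMap.toContinuousLinearMap
    { toFun := fun X => X *ᵥ v
      map_add' := fun X Y => Matrix.add_mulVec X Y v
      map_smul' := fun c X => Matrix.smul_mulVec c X v }

@[simp] lemma mvCLM_apply (v : Fin n → ℂ) (X : Matrix (Fin n) (Fin n) ℂ) :
    mvCLM v X = X *ᵥ v := rfl

lemma exp_mulVec_eq (Ac : Matrix (Fin n) (Fin n) ℂ) (μ : ℂ) (K : ℕ) (v : Fin n → ℂ)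
    (hv : ((Ac - μ • 1) ^ K) *ᵥ v = 0) (t : ℝ) :
    exp (t • Ac) *ᵥ v = Complex.exp ((t : ℂ) * μ) •
      ∑ j ∈ Finset.range K, (((t : ℂ) ^ j * (j.factorial : ℂ)⁻¹)) •
        (((Ac - μ • 1) ^ j) *ᵥ v) := by
  set N : Matrix (Fin n) (Fin n) ℂ := Ac - μ • 1 with hN
  have h0 : t • Ac = (t : ℂ) • Ac := by
    ext i j; simp [Matrix.smul_apply, Complex.real_smul]
  have hsplit : t • Ac = ((t : ℂ) * μ) • (1 : Matrix (Fin n) (Fin n) ℂ) + (t : ℂ) • N := by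
    rw [h0, hN, smul_sub, smul_smul]
    abel
  have hcomm : Commute (((t : ℂ) * μ) • (1 : Matrix (Fin n) (Fin n) ℂ)) ((t : ℂ) • N) :=
    ((Commute.one_left N).smul_left _).smul_right _
  have hexp : exp (t • Ac) = Complex.exp ((t : ℂ) * μ) • exp ((t : ℂ) • N) := by
    rw [hsplit]
    erw [exp_add_of_commute hcomm]
    rw [← Algebra.algebraMap_eq_smul_one,
      ← algebraMap_exp_comm, ← Algebra.smul_def, Complex.exp_eq_exp_ℂ]
    rfl
  have happ : exp ((t : ℂ) • N) *ᵥ v =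
      ∑ j ∈ Finset.range K, (((t : ℂ) ^ j * (j.factorial : ℂ)⁻¹)) • ((N ^ j) *ᵥ v) := by
    have hsum : Summable fun k : ℕ => ((k.factorial : ℂ)⁻¹) • ((t : ℂ) • N) ^ k :=
      expSeries_summable' ((t : ℂ) • N)
    have h1 : exp ((t : ℂ) • N) *ᵥ v
        = ∑' k : ℕ, (mvCLM v) (((k.factorial : ℂ)⁻¹) • ((t : ℂ) • N) ^ k) := by
      rw [exp_eq_tsum ℂ]
      exact ((mvCLM v).map_tsum hsum)
    rw [h1]
    have h2 : ∀ k : ℕ, (mvCLM v) (((k.factorial : ℂ)⁻¹) • ((t : ℂ) • N) ^ k)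
        = (((t : ℂ) ^ k * (k.factorial : ℂ)⁻¹)) • ((N ^ k) *ᵥ v) := by
      intro k
      rw [smul_pow]
      simp only [mvCLM_apply, Matrix.smul_mulVec, smul_smul]
      rw [mul_comm]
    rw [tsum_congr h2]
    refine tsum_eq_sum fun k hk => ?_
    have hKk : K ≤ k := le_of_not_gt fun h => hk (Finset.mem_range.mpr h)
    have : (N ^ k) *ᵥ v = 0 := by
      rw [show k = (k - K) + K by omega, pow_add, ← Matrix.mulVec_mulVec, hv,
        Matrix.mulVec_zero]
    rw [this, smul_zero]
  rw [hexp, Matrix.smul_mulVec, happ]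

lemma decay_vec {A : Matrix (Fin n) (Fin n) ℝ} (hA : IsHurwitz A) (v : Fin n → ℂ) :
    ∃ c ε : ℝ, 0 < ε ∧ 0 ≤ c ∧ ∀ t : ℝ, 0 ≤ t →
      ‖exp (t • A.map (algebraMap ℝ ℂ)) *ᵥ v‖ ≤ c * Real.exp (-ε * t) := by
  set Ac : Matrix (Fin n) (Fin n) ℂ := A.map (algebraMap ℝ ℂ) with hAc
  set f : Module.End ℂ (Fin n → ℂ) := Matrix.toLinAlgEquiv' Ac with hf
  have hv : v ∈ ⨆ μ : ℂ, f.maxGenEigenspace μ := by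
    rw [Module.End.iSup_maxGenEigenspace_eq_top]; trivial
  refine Submodule.iSup_induction
    (motive := fun w => ∃ c ε : ℝ, 0 < ε ∧ 0 ≤ c ∧ ∀ t : ℝ, 0 ≤ t →
      ‖exp (t • Ac) *ᵥ w‖ ≤ c * Real.exp (-ε * t)) _ hv ?_ ?_ ?_
  · -- generalized eigenvectors
    intro μ w hw
    rcases eq_or_ne w 0 with rfl | hw0
    · exact ⟨0, 1, one_pos, le_refl 0, fun t _ => by simp⟩
    rw [Module.End.mem_maxGenEigenspace] at hw
    obtain ⟨K, hK⟩ := hw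
    have hμre : μ.re < 0 := by
      apply hA
      rw [← AlgEquiv.spectrum_eq (Matrix.toLinAlgEquiv' :
        Matrix (Fin n) (Fin n) ℂ ≃ₐ[ℂ] _) Ac]
      rw [← Module.End.hasEigenvalue_iff_mem_spectrum]
      refine Module.End.hasEigenvalue_of_hasGenEigenvalue (k := K) ?_
      rw [Module.End.hasGenEigenvalue_iff]
      intro hbot
      apply hw0
      have hmem : w ∈ (f.genEigenspace μ) K := by
        rw [Module.End.genEigenspace_nat]
        exact hK
      rw [hbot] at hmem
      simpa using hmem
    have hKm : ((Ac - μ • 1) ^ K) *ᵥ w = 0 := by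
      have h1 : f - μ • 1 = Matrix.toLinAlgEquiv' (Ac - μ • (1 : Matrix (Fin n) (Fin n) ℂ)) := by
        rw [map_sub, _root_.map_smul, _root_.map_one, hf]
      rw [h1, ← map_pow] at hK
      rw [Matrix.toLinAlgEquiv'_apply] at hK
      exact hK
    obtain ⟨C, hC0, hCb⟩ := poly_exp_bound K (δ := -μ.re / 2) (by linarith)
    set S : ℝ := ∑ j ∈ Finset.range K, ‖((Ac - μ • 1) ^ j) *ᵥ w‖ with hS
    have hS0 : 0 ≤ S := Finset.sum_nonneg fun j _ => norm_nonneg _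
    refine ⟨S * C, -μ.re / 2, by linarith, by positivity, fun t ht => ?_⟩
    rw [exp_mulVec_eq Ac μ K w hKm t]
    have h1t : (1 : ℝ) ≤ 1 + t := by linarith
    have hcoef : ∀ j ∈ Finset.range K,
        ‖(((t : ℂ) ^ j * (j.factorial : ℂ)⁻¹)) • (((Ac - μ • 1) ^ j) *ᵥ w)‖
          ≤ (1 + t) ^ K * ‖((Ac - μ • 1) ^ j) *ᵥ w‖ := by
      intro j hj
      rw [norm_smul]
      refine mul_le_mul_of_nonneg_right ?_ (norm_nonneg _)
      rw [norm_mul, norm_pow, norm_inv]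
      have h1 : ‖(t : ℂ)‖ = t := by rw [Complex.norm_real, Real.norm_eq_abs, abs_of_nonneg ht]
      have h2 : (1 : ℝ) ≤ ‖(j.factorial : ℂ)‖ := by
        rw [show ((j.factorial : ℂ)) = ((j.factorial : ℝ) : ℂ) by push_cast; ring,
          Complex.norm_real, Real.norm_eq_abs, abs_of_nonneg (by positivity)]
        exact_mod_cast j.factorial_pos
      calc ‖(t : ℂ)‖ ^ j * ‖(j.factorial : ℂ)‖⁻¹
          ≤ ‖(t : ℂ)‖ ^ j * 1 := by
            refine mul_le_mul_of_nonneg_left ?_ (by positivity)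
            rw [inv_le_one_iff₀]; right; exact h2
        _ = t ^ j := by rw [mul_one, h1]
        _ ≤ (1 + t) ^ j := pow_le_pow_left₀ ht (by linarith) j
        _ ≤ (1 + t) ^ K := pow_le_pow_right₀ h1t (Finset.mem_range.mp hj).le
    set W := ∑ j ∈ Finset.range K,
      (((t : ℂ) ^ j * (j.factorial : ℂ)⁻¹)) • (((Ac - μ • 1) ^ j) *ᵥ w) with hW
    set E := Real.exp (-(-μ.re / 2) * t) with hE
    have hWb : ‖W‖ ≤ (1 + t) ^ K * S := by
      calc ‖W‖ ≤ ∑ j ∈ Finset.range K, ‖(((t : ℂ) ^ j * (j.factorial : ℂ)⁻¹)) •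
              (((Ac - μ • 1) ^ j) *ᵥ w)‖ := norm_sum_le _ _
        _ ≤ ∑ j ∈ Finset.range K, (1 + t) ^ K * ‖((Ac - μ • 1) ^ j) *ᵥ w‖ :=
            Finset.sum_le_sum hcoef
        _ = (1 + t) ^ K * S := by rw [hS, Finset.mul_sum]
    have hnorm1 : ‖Complex.exp ((t : ℂ) * μ)‖ = Real.exp (t * μ.re) := by
      rw [Complex.norm_exp]
      congr 1
      simp [Complex.mul_re]
    have hsplitexp : Real.exp (t * μ.re) = E * E := by
      rw [hE, ← Real.exp_add]; ring_nf
    have hEpos : 0 ≤ E := Real.exp_nonneg _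
    have key : (1 + t) ^ K * E ≤ C := hCb t ht
    rw [norm_smul, hnorm1, hsplitexp]
    calc E * E * ‖W‖ ≤ E * E * ((1 + t) ^ K * S) := by
          refine mul_le_mul_of_nonneg_left hWb (by positivity)
      _ = S * ((1 + t) ^ K * E) * E := by ring
      _ ≤ S * C * E := by
          refine mul_le_mul_of_nonneg_right ?_ hEpos
          exact mul_le_mul_of_nonneg_left key hS0
  · exact ⟨0, 1, one_pos, le_refl 0, fun t _ => by simp⟩
  · rintro x y ⟨c₁, ε₁, hε₁, hc₁, h₁⟩ ⟨c₂, ε₂, hε₂, hc₂, h₂⟩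
    refine ⟨c₁ + c₂, min ε₁ ε₂, lt_min hε₁ hε₂, by positivity, fun t ht => ?_⟩
    have e₁ : Real.exp (-ε₁ * t) ≤ Real.exp (-(min ε₁ ε₂) * t) := by
      apply Real.exp_le_exp.mpr
      have := min_le_left ε₁ ε₂
      nlinarith
    have e₂ : Real.exp (-ε₂ * t) ≤ Real.exp (-(min ε₁ ε₂) * t) := by
      apply Real.exp_le_exp.mpr
      have := min_le_right ε₁ ε₂
      nlinarith
    calc ‖exp (t • Ac) *ᵥ (x + y)‖
        = ‖exp (t • Ac) *ᵥ x + exp (t • Ac) *ᵥ y‖ := by rw [Matrix.mulVec_add]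
      _ ≤ ‖exp (t • Ac) *ᵥ x‖ + ‖exp (t • Ac) *ᵥ y‖ := norm_add_le _ _
      _ ≤ c₁ * Real.exp (-ε₁ * t) + c₂ * Real.exp (-ε₂ * t) := add_le_add (h₁ t ht) (h₂ t ht)
      _ ≤ c₁ * Real.exp (-(min ε₁ ε₂) * t) + c₂ * Real.exp (-(min ε₁ ε₂) * t) :=
          add_le_add (mul_le_mul_of_nonneg_left e₁ hc₁) (mul_le_mul_of_nonneg_left e₂ hc₂)
      _ = (c₁ + c₂) * Real.exp (-(min ε₁ ε₂) * t) := by ring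

/-- Exponential decay of `t ↦ exp (t • A)`. -/
def ExpDecay (A : Matrix (Fin n) (Fin n) ℝ) : Prop :=
  ∃ c ε : ℝ, 0 < ε ∧ 0 ≤ c ∧ ∀ t : ℝ, 0 ≤ t → ‖exp (t • A)‖ ≤ c * Real.exp (-ε * t)

lemma map_exp_complex (A : Matrix (Fin n) (Fin n) ℝ) (t : ℝ) :
    (exp (t • A)).map (algebraMap ℝ ℂ) = exp (t • A.map (algebraMap ℝ ℂ)) := by
  have hΦc : Continuous ((Algebra.ofId ℝ ℂ).mapMatrix :
      Matrix (Fin n) (Fin n) ℝ →ₐ[ℝ] Matrix (Fin n) (Fin n) ℂ) :=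
    LinearMap.continuous_of_finiteDimensional
      ((Algebra.ofId ℝ ℂ).mapMatrix : Matrix (Fin n) (Fin n) ℝ →ₐ[ℝ] _).toLinearMap
  have h1 := map_exp ((Algebra.ofId ℝ ℂ).mapMatrix :
      Matrix (Fin n) (Fin n) ℝ →ₐ[ℝ] Matrix (Fin n) (Fin n) ℂ) hΦc (t • A)
  have h2 : ((Algebra.ofId ℝ ℂ).mapMatrix : Matrix (Fin n) (Fin n) ℝ →ₐ[ℝ] _) (t • A)
      = t • A.map (algebraMap ℝ ℂ) := by
    rw [_root_.map_smul]
    rfl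
  have h3 : (exp (t • A)).map (algebraMap ℝ ℂ)
      = ((Algebra.ofId ℝ ℂ).mapMatrix : Matrix (Fin n) (Fin n) ℝ →ₐ[ℝ] _) (exp (t • A)) :=
    rfl
  rw [h3]
  exact h1.trans (congrArg NormedSpace.exp h2)

lemma linfty_norm_le_of_rows {M : Matrix (Fin n) (Fin n) ℝ} {b : ℝ} (hb : 0 ≤ b)
    (h : ∀ i, ∑ j, ‖M i j‖ ≤ b) : ‖M‖ ≤ b := by
  rw [Matrix.linfty_opNorm_def]
  lift b to NNReal using hb with b'
  rw [NNReal.coe_le_coe]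
  refine Finset.sup_le fun i _ => ?_
  have := h i
  rw [show ∑ j, ‖M i j‖ = ((∑ j, ‖M i j‖₊ : NNReal) : ℝ) by push_cast; rfl] at this
  exact_mod_cast this

lemma expDecay_of_isHurwitz {A : Matrix (Fin n) (Fin n) ℝ} (hA : IsHurwitz A) : ExpDecay A := by
  rcases Nat.eq_zero_or_pos n with hn | hn
  · subst hn
    refine ⟨0, 1, one_pos, le_refl 0, fun t ht => ?_⟩
    have : ‖exp (t • A)‖ ≤ 0 :=
      linfty_norm_le_of_rows le_rfl (fun i => i.elim0)
    rw [zero_mul]; exact this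
  · have : ∀ j : Fin n, ∃ c ε : ℝ, 0 < ε ∧ 0 ≤ c ∧ ∀ t : ℝ, 0 ≤ t →
        ‖exp (t • A.map (algebraMap ℝ ℂ)) *ᵥ Pi.single j 1‖ ≤ c * Real.exp (-ε * t) :=
      fun j => decay_vec hA _
    choose cf εf hεf hcf hbf using this
    have hne : (Finset.univ : Finset (Fin n)).Nonempty := by
      rwa [Finset.univ_nonempty_iff, ← Fin.pos_iff_nonempty]
    set ε := Finset.univ.inf' hne εf with hε
    have hεpos : 0 < ε := by
      rw [hε, Finset.lt_inf'_iff]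
      exact fun j _ => hεf j
    refine ⟨∑ j, cf j, ε, hεpos, Finset.sum_nonneg fun j _ => hcf j, fun t ht => ?_⟩
    have hentry : ∀ i j : Fin n, ‖exp (t • A) i j‖ ≤ cf j * Real.exp (-ε * t) := by
      intro i j
      have h1 : ((exp (t • A)).map (algebraMap ℝ ℂ)) i j
          = algebraMap ℝ ℂ (exp (t • A) i j) := rfl
      have h2 : ‖exp (t • A) i j‖ = ‖(exp (t • A.map (algebraMap ℝ ℂ))) i j‖ := by
        rw [← map_exp_complex, h1]
        simp [Complex.norm_real]
      have h3 : (exp (t • A.map (algebraMap ℝ ℂ))) i j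
          = (exp (t • A.map (algebraMap ℝ ℂ)) *ᵥ Pi.single j 1) i := by
        rw [Matrix.mulVec_single]
        simp
      have h4 : ‖(exp (t • A.map (algebraMap ℝ ℂ)) *ᵥ Pi.single j 1) i‖
          ≤ ‖exp (t • A.map (algebraMap ℝ ℂ)) *ᵥ Pi.single j 1‖ :=
        norm_le_pi_norm _ i
      have h5 := hbf j t ht
      have h6 : Real.exp (-εf j * t) ≤ Real.exp (-ε * t) := by
        apply Real.exp_le_exp.mpr
        have : ε ≤ εf j := Finset.inf'_le _ (Finset.mem_univ j)
        nlinarith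
      calc ‖exp (t • A) i j‖
          = ‖(exp (t • A.map (algebraMap ℝ ℂ)) *ᵥ Pi.single j 1) i‖ := by rw [h2, h3]
        _ ≤ ‖exp (t • A.map (algebraMap ℝ ℂ)) *ᵥ Pi.single j 1‖ := h4
        _ ≤ cf j * Real.exp (-εf j * t) := h5
        _ ≤ cf j * Real.exp (-ε * t) := mul_le_mul_of_nonneg_left h6 (hcf j)
    refine linfty_norm_le_of_rows (mul_nonneg (Finset.sum_nonneg fun j _ => hcf j) (Real.exp_nonneg _)) fun i => ?_
    calc ∑ j, ‖exp (t • A) i j‖ ≤ ∑ j, cf j * Real.exp (-ε * t) :=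
          Finset.sum_le_sum fun j _ => hentry i j
      _ = (∑ j, cf j) * Real.exp (-ε * t) := by rw [← Finset.sum_mul]

lemma isHurwitz_transpose {A : Matrix (Fin n) (Fin n) ℝ} (hA : IsHurwitz A) : IsHurwitz Aᵀ := by
  intro μ hμ
  apply hA
  have htr : (Aᵀ).map (algebraMap ℝ ℂ) = (A.map (algebraMap ℝ ℂ))ᵀ := rfl
  rw [htr] at hμ
  rw [spectrum.mem_iff] at hμ ⊢
  intro hunit
  apply hμ
  have : algebraMap ℂ (Matrix (Fin n) (Fin n) ℂ) μ - (A.map (algebraMap ℝ ℂ))ᵀ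
      = (algebraMap ℂ (Matrix (Fin n) (Fin n) ℂ) μ - A.map (algebraMap ℝ ℂ))ᵀ := by
    rw [Matrix.transpose_sub]
    congr 1
    rw [Matrix.algebraMap_eq_diagonal]
    exact (Matrix.diagonal_transpose _).symm
  rw [this]
  rw [Matrix.isUnit_iff_isUnit_det] at hunit ⊢
  rwa [Matrix.det_transpose]


noncomputable def entryCLM (i j : Fin n) : Matrix (Fin n) (Fin n) ℝ →L[ℝ] ℝ :=
  LinearMap.toContinuousLinearMap
    { toFun := fun X => X i j
      map_add' := fun _ _ => rfl
      map_smul' := fun _ _ => rfl }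

@[simp] lemma entryCLM_apply (i j : Fin n) (X : Matrix (Fin n) (Fin n) ℝ) :
    entryCLM i j X = X i j := rfl

noncomputable def sandwichCLM (U V : Matrix (Fin n) (Fin n) ℝ) :
    Matrix (Fin n) (Fin n) ℝ →L[ℝ] Matrix (Fin n) (Fin n) ℝ :=
  LinearMap.toContinuousLinearMap
    { toFun := fun X => U * X * V
      map_add' := fun X Y => by noncomm_ring
      map_smul' := fun c X => by simp [Matrix.mul_smul, Matrix.smul_mul] }

@[simp] lemma sandwichCLM_apply (U V X : Matrix (Fin n) (Fin n) ℝ) :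
    sandwichCLM U V X = U * X * V := rfl


lemma expCont (A : Matrix (Fin n) (Fin n) ℝ) : Continuous fun t : ℝ => exp (t • A) :=
  exp_continuous.comp (continuous_id.smul continuous_const)

lemma sandwich_cont (A X : Matrix (Fin n) (Fin n) ℝ) :
    Continuous fun t : ℝ => exp (t • Aᵀ) * X * exp (t • A) :=
  ((expCont Aᵀ).mul continuous_const).mul (expCont A)

lemma sandwich_norm_le {A : Matrix (Fin n) (Fin n) ℝ} {c₁ ε₁ c₂ ε₂ : ℝ}
    (hc₁ : 0 ≤ c₁) (hc₂ : 0 ≤ c₂)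
    (h₁ : ∀ t : ℝ, 0 ≤ t → ‖exp (t • Aᵀ)‖ ≤ c₁ * Real.exp (-ε₁ * t))
    (h₂ : ∀ t : ℝ, 0 ≤ t → ‖exp (t • A)‖ ≤ c₂ * Real.exp (-ε₂ * t))
    (X : Matrix (Fin n) (Fin n) ℝ) {t : ℝ} (ht : 0 ≤ t) :
    ‖exp (t • Aᵀ) * X * exp (t • A)‖ ≤ (c₁ * ‖X‖ * c₂) * Real.exp (-(ε₁ + ε₂) * t) := by
  calc ‖exp (t • Aᵀ) * X * exp (t • A)‖
      ≤ ‖exp (t • Aᵀ)‖ * ‖X‖ * ‖exp (t • A)‖ :=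
        le_trans (norm_mul_le _ _) (by
          have := norm_mul_le (exp (t • Aᵀ)) X
          exact mul_le_mul_of_nonneg_right this (norm_nonneg _))
    _ ≤ (c₁ * Real.exp (-ε₁ * t)) * ‖X‖ * (c₂ * Real.exp (-ε₂ * t)) := by
        apply mul_le_mul _ (h₂ t ht) (norm_nonneg _) (by positivity)
        exact mul_le_mul_of_nonneg_right (h₁ t ht) (norm_nonneg _)
    _ = (c₁ * ‖X‖ * c₂) * Real.exp (-(ε₁ + ε₂) * t) := by
        rw [show -(ε₁ + ε₂) * t = (-ε₁ * t) + (-ε₂ * t) by ring, Real.exp_add]; ring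

lemma integrable_sandwich {A : Matrix (Fin n) (Fin n) ℝ} (hA : ExpDecay A) (hAT : ExpDecay Aᵀ)
    (X : Matrix (Fin n) (Fin n) ℝ) :
    IntegrableOn (fun t : ℝ => exp (t • Aᵀ) * X * exp (t • A)) (Ioi 0) := by
  obtain ⟨c₁, ε₁, hε₁, hc₁, h₁⟩ := hAT
  obtain ⟨c₂, ε₂, hε₂, hc₂, h₂⟩ := hA
  refine Integrable.mono' (g := fun t => (c₁ * ‖X‖ * c₂) * Real.exp (-(ε₁ + ε₂) * t))
    ((exp_neg_integrableOn_Ioi 0 (by positivity)).const_mul _)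
    (by exact (sandwich_cont A X).aestronglyMeasurable) ?_
  filter_upwards [ae_restrict_mem measurableSet_Ioi] with t ht
  exact sandwich_norm_le hc₁ hc₂ h₁ h₂ X (le_of_lt ht)

lemma tendsto_sandwich_zero {A : Matrix (Fin n) (Fin n) ℝ} (hA : ExpDecay A) (hAT : ExpDecay Aᵀ)
    (X : Matrix (Fin n) (Fin n) ℝ) :
    Tendsto (fun t : ℝ => exp (t • Aᵀ) * X * exp (t • A)) atTop (𝓝 0) := by
  obtain ⟨c₁, ε₁, hε₁, hc₁, h₁⟩ := hAT
  obtain ⟨c₂, ε₂, hε₂, hc₂, h₂⟩ := hA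
  have hb : ∀ᶠ t : ℝ in atTop, ‖exp (t • Aᵀ) * X * exp (t • A)‖ ≤
      (c₁ * ‖X‖ * c₂) * Real.exp (-(ε₁ + ε₂) * t) := by
    filter_upwards [eventually_ge_atTop (0:ℝ)] with t ht
    exact sandwich_norm_le hc₁ hc₂ h₁ h₂ X ht
  have hg : Tendsto (fun t : ℝ => (c₁ * ‖X‖ * c₂) * Real.exp (-(ε₁ + ε₂) * t)) atTop (𝓝 0) := by
    rw [show (0:ℝ) = (c₁ * ‖X‖ * c₂) * 0 by ring]
    refine Tendsto.const_mul _ ?_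
    exact Real.tendsto_exp_atBot.comp
      (tendsto_id.const_mul_atTop_of_neg (by linarith : -(ε₁ + ε₂) < 0))
  exact squeeze_zero_norm' hb hg

noncomputable def lyapCLM (A : Matrix (Fin n) (Fin n) ℝ) :
    Matrix (Fin n) (Fin n) ℝ →L[ℝ] Matrix (Fin n) (Fin n) ℝ :=
  LinearMap.toContinuousLinearMap
    { toFun := fun X => Aᵀ * X + X * A
      map_add' := fun X Y => by noncomm_ring
      map_smul' := fun c X => by simp [Matrix.mul_smul, Matrix.smul_mul] }

@[simp] lemma lyapCLM_apply (A X : Matrix (Fin n) (Fin n) ℝ) :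
    lyapCLM A X = Aᵀ * X + X * A := rfl

lemma hasDerivAt_sandwich (A X : Matrix (Fin n) (Fin n) ℝ) (t : ℝ) :
    HasDerivAt (fun t : ℝ => exp (t • Aᵀ) * X * exp (t • A))
      (lyapCLM A (exp (t • Aᵀ) * X * exp (t • A))) t := by
  have h1 : HasDerivAt (fun t : ℝ => exp (t • Aᵀ)) (Aᵀ * exp (t • Aᵀ)) t :=
    hasDerivAt_exp_smul_const' Aᵀ t
  have h2 : HasDerivAt (fun t : ℝ => exp (t • A)) (exp (t • A) * A) t :=
    hasDerivAt_exp_smul_const A t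
  have := (h1.mul_const X).mul h2
  refine HasDerivAt.congr_deriv (by exact this) ?_
  simp only [lyapCLM_apply]
  noncomm_ring

lemma lyap_of_decay {A : Matrix (Fin n) (Fin n) ℝ} (hA : ExpDecay A) (hAT : ExpDecay Aᵀ)
    (X : Matrix (Fin n) (Fin n) ℝ) :
    Aᵀ * (∫ t in Ioi (0:ℝ), exp (t • Aᵀ) * X * exp (t • A))
      + (∫ t in Ioi (0:ℝ), exp (t • Aᵀ) * X * exp (t • A)) * A + X = 0 := by
  set F := fun t : ℝ => exp (t • Aᵀ) * X * exp (t • A) with hF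
  set L := ∫ t in Ioi (0:ℝ), F t with hL
  have hF0 : F 0 = X := by simp [hF]
  have key : ∀ T : ℝ, lyapCLM A (∫ t in (0:ℝ)..T, F t) = F T - X := by
    intro T
    have h1 : (∫ t in (0:ℝ)..T, lyapCLM A (F t)) = F T - F 0 :=
      intervalIntegral.integral_eq_sub_of_hasDerivAt
        (fun t _ => hasDerivAt_sandwich A X t)
        (((lyapCLM A).continuous.comp (sandwich_cont A X)).intervalIntegrable _ _)
    erw [(lyapCLM A).intervalIntegral_comp_comm
      ((sandwich_cont A X).intervalIntegrable _ _)] at h1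
    rw [hF0] at h1
    exact h1
  have t1 : Tendsto (fun T : ℝ => lyapCLM A (∫ t in (0:ℝ)..T, F t)) atTop (𝓝 (lyapCLM A L)) :=
    ((lyapCLM A).continuous.tendsto _).comp
      (intervalIntegral_tendsto_integral_Ioi 0 (integrable_sandwich hA hAT X) tendsto_id)
  have t2 : Tendsto (fun T : ℝ => F T - X) atTop (𝓝 (0 - X)) :=
    (tendsto_sandwich_zero hA hAT X).sub tendsto_const_nhds
  have h3 := tendsto_nhds_unique (t1.congr fun T => key T) t2
  rw [lyapCLM_apply] at h3
  rw [h3]; abel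

lemma lyap_unique {A : Matrix (Fin n) (Fin n) ℝ} (hA : ExpDecay A) (hAT : ExpDecay Aᵀ)
    {Y Z : Matrix (Fin n) (Fin n) ℝ} (h : Aᵀ * Y + Y * A = Aᵀ * Z + Z * A) : Y = Z := by
  set D := Y - Z with hD
  have hD0 : Aᵀ * D + D * A = 0 := by
    have h2 : Aᵀ * D + D * A = (Aᵀ * Y + Y * A) - (Aᵀ * Z + Z * A) := by
      simp only [hD]; noncomm_ring
    rw [h2, h, sub_self]
  set G := fun t : ℝ => exp (t • Aᵀ) * D * exp (t • A) with hG
  have hGd : ∀ t : ℝ, HasDerivAt G 0 t := by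
    intro t
    have hds := hasDerivAt_sandwich A D t
    convert hds using 1
    have hcom : Aᵀ * exp (t • Aᵀ) = exp (t • Aᵀ) * Aᵀ :=
      (((Commute.refl Aᵀ).smul_right t).exp_right).eq
    simp only [lyapCLM_apply]
    calc (0 : Matrix (Fin n) (Fin n) ℝ)
        = exp (t • Aᵀ) * (Aᵀ * D + D * A) * exp (t • A) := by rw [hD0]; simp
      _ = Aᵀ * (exp (t • Aᵀ) * D * exp (t • A))
          + exp (t • Aᵀ) * D * exp (t • A) * A := by
          have hcom2 : A * exp (t • A) = exp (t • A) * A :=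
            (((Commute.refl A).smul_right t).exp_right).eq
          simp only [Matrix.mul_add, Matrix.add_mul, Matrix.mul_assoc, hcom2]
          rw [← Matrix.mul_assoc (exp (t • Aᵀ)) Aᵀ _, ← hcom, Matrix.mul_assoc]
  have hconst : G 0 = D := by simp [hG]
  have hD0' : D = 0 := by
    have hc : ∀ t : ℝ, G t = G 0 := by
      intro t
      have hfc : (∫ x in (0:ℝ)..t, (0 : Matrix (Fin n) (Fin n) ℝ)) = G t - G 0 :=
        intervalIntegral.integral_eq_sub_of_hasDerivAt (fun x _ => hGd x)
          (intervalIntegrable_const)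
      rw [intervalIntegral.integral_zero] at hfc
      have := hfc.symm
      rw [sub_eq_zero] at this
      exact this
    have h4 := tendsto_nhds_unique
      ((tendsto_sandwich_zero hA hAT D).congr (fun t => hc t))
      (tendsto_const_nhds : Tendsto (fun _ : ℝ => G 0) atTop (𝓝 (G 0)))
    rw [hconst] at h4; exact h4.symm
  rw [← sub_eq_zero]; exact hD0'

lemma gramian_eq {A : Matrix (Fin n) (Fin n) ℝ} (hA : ExpDecay A) (hAT : ExpDecay Aᵀ)
    {X Q : Matrix (Fin n) (Fin n) ℝ} (hQ : Aᵀ * Q + Q * A + X = 0) :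
    Q = ∫ t in Ioi (0:ℝ), exp (t • Aᵀ) * X * exp (t • A) := by
  apply lyap_unique hA hAT
  have h1 := lyap_of_decay hA hAT X
  have h2 : Aᵀ * Q + Q * A = -X := eq_neg_of_add_eq_zero_left hQ
  rw [h2]
  exact (eq_neg_of_add_eq_zero_left h1).symm

end QOG

section Main
open NormedSpace Set Filter Topology QOG
attribute [local instance] Matrix.linftyOpSemiNormedRing Matrix.linftyOpNormedRing
  Matrix.linftyOpNormedAlgebra

/-- Integral representation of the quadratic-output observability Gramian. -/
theorem qo_observability_gramian_integral {n m p : ℕ}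
    (A : Matrix (Fin n) (Fin n) ℝ) (B : Matrix (Fin n) (Fin m) ℝ)
    (C : Matrix (Fin p) (Fin n) ℝ) (M : Fin p → Matrix (Fin n) (Fin n) ℝ)
    (hA : IsHurwitz A) (hM : ∀ k, (M k)ᵀ = M k)
    (P : Matrix (Fin n) (Fin n) ℝ)
    (hP : A * P + P * Aᵀ + B * Bᵀ = 0)
    (Q : Matrix (Fin n) (Fin n) ℝ)
    (hQ : Aᵀ * Q + Q * A + Cᵀ * C + ∑ k, M k * P * M k = 0) :
    Q = (Matrix.of fun i j => ∫ τ in Set.Ioi (0 : ℝ),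
          (NormedSpace.exp (τ • Aᵀ) * Cᵀ * C * NormedSpace.exp (τ • A)) i j)
      + ∑ k, Matrix.of fun i j =>
          ∫ τ₁ in Set.Ioi (0 : ℝ), ∫ τ₂ in Set.Ioi (0 : ℝ),
            ((NormedSpace.exp (τ₁ • Aᵀ) * M k * NormedSpace.exp (τ₂ • A) * B) *
             (NormedSpace.exp (τ₁ • Aᵀ) * M k * NormedSpace.exp (τ₂ • A) * B)ᵀ) i j := by
  have hAd : ExpDecay A := expDecay_of_isHurwitz hA
  have hATd : ExpDecay Aᵀ := expDecay_of_isHurwitz (isHurwitz_transpose hA)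
  have hATTd : ExpDecay Aᵀᵀ := by rwa [transpose_transpose]
  -- P as an integral
  have hPrep : P = ∫ t in Ioi (0:ℝ), exp (t • A) * (B * Bᵀ) * exp (t • Aᵀ) := by
    have h := gramian_eq (A := Aᵀ) hATd hATTd (X := B * Bᵀ) (Q := P)
      (by rw [transpose_transpose]; exact hP)
    simpa [transpose_transpose] using h
  -- Q as an integral
  set X : Matrix (Fin n) (Fin n) ℝ := Cᵀ * C + ∑ k, M k * P * M k with hX
  have hQ' : Aᵀ * Q + Q * A + X = 0 := by
    rw [hX, ← add_assoc]; exact hQ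
  have hQrep : Q = ∫ t in Ioi (0:ℝ), exp (t • Aᵀ) * X * exp (t • A) :=
    gramian_eq hAd hATd hQ'
  -- split the integral
  have hLsplit : (∫ t in Ioi (0:ℝ), exp (t • Aᵀ) * X * exp (t • A))
      = (∫ t in Ioi (0:ℝ), exp (t • Aᵀ) * (Cᵀ * C) * exp (t • A))
        + ∑ k, ∫ t in Ioi (0:ℝ), exp (t • Aᵀ) * (M k * P * M k) * exp (t • A) := by
    have h1 : (fun t : ℝ => exp (t • Aᵀ) * X * exp (t • A))
        = fun t : ℝ => exp (t • Aᵀ) * (Cᵀ * C) * exp (t • A)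
          + ∑ k, exp (t • Aᵀ) * (M k * P * M k) * exp (t • A) := by
      funext t
      rw [hX, Matrix.mul_add, Matrix.add_mul, Finset.mul_sum, Finset.sum_mul]
    rw [h1, integral_add (integrable_sandwich hAd hATd _)
      (integrable_finset_sum _ fun k _ => integrable_sandwich hAd hATd _),
      integral_finset_sum _ fun k _ => integrable_sandwich hAd hATd _]
  -- first term entrywise
  have hfirst : (Matrix.of fun i j => ∫ τ in Set.Ioi (0 : ℝ),
        (exp (τ • Aᵀ) * Cᵀ * C * exp (τ • A)) i j)
      = ∫ t in Ioi (0:ℝ), exp (t • Aᵀ) * (Cᵀ * C) * exp (t • A) := by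
    ext i j
    rw [Matrix.of_apply]
    have hfe : (fun τ : ℝ => (exp (τ • Aᵀ) * Cᵀ * C * exp (τ • A)) i j)
        = fun τ : ℝ => entryCLM i j (exp (τ • Aᵀ) * (Cᵀ * C) * exp (τ • A)) := by
      funext τ
      rw [entryCLM_apply, Matrix.mul_assoc (exp (τ • Aᵀ)) Cᵀ C]
    erw [hfe, (entryCLM i j).integral_comp_comm (integrable_sandwich hAd hATd _)]
    rfl
  -- second terms
  have hsecond : ∀ k, (Matrix.of fun i j =>
        ∫ τ₁ in Set.Ioi (0 : ℝ), ∫ τ₂ in Set.Ioi (0 : ℝ),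
          ((exp (τ₁ • Aᵀ) * M k * exp (τ₂ • A) * B) *
           (exp (τ₁ • Aᵀ) * M k * exp (τ₂ • A) * B)ᵀ) i j)
      = ∫ t in Ioi (0:ℝ), exp (t • Aᵀ) * (M k * P * M k) * exp (t • A) := by
    intro k
    -- the inner integrand, rewritten as a sandwich
    have hGint : IntegrableOn (fun τ₂ : ℝ => exp (τ₂ • A) * (B * Bᵀ) * exp (τ₂ • Aᵀ))
        (Ioi 0) := by
      have h := integrable_sandwich (A := Aᵀ) hATd hATTd (B * Bᵀ)
      simpa [transpose_transpose] using h
    have hT1 : ∀ τ₁ : ℝ, (exp (τ₁ • Aᵀ) * M k)ᵀ = M k * exp (τ₁ • A) := by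
      intro τ₁
      rw [Matrix.transpose_mul, hM k]
      congr 1
      rw [show τ₁ • Aᵀ = (τ₁ • A)ᵀ from (Matrix.transpose_smul τ₁ A).symm,
        Matrix.exp_transpose, transpose_transpose]
    have hTr : ∀ τ₂ : ℝ, (exp (τ₂ • A))ᵀ = exp (τ₂ • Aᵀ) := by
      intro τ₂
      rw [show τ₂ • Aᵀ = (τ₂ • A)ᵀ from (Matrix.transpose_smul τ₂ A).symm,
        Matrix.exp_transpose]
    have hre : ∀ τ₁ τ₂ : ℝ,
        ((exp (τ₁ • Aᵀ) * M k * exp (τ₂ • A) * B) *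
         (exp (τ₁ • Aᵀ) * M k * exp (τ₂ • A) * B)ᵀ)
        = (exp (τ₁ • Aᵀ) * M k) * (exp (τ₂ • A) * (B * Bᵀ) * exp (τ₂ • Aᵀ)) *
          (exp (τ₁ • Aᵀ) * M k)ᵀ := by
      intro τ₁ τ₂
      rw [Matrix.transpose_mul, Matrix.transpose_mul, Matrix.transpose_mul, hTr τ₂]
      simp only [Matrix.mul_assoc, Matrix.transpose_transpose]
    have hInner : ∀ τ₁ : ℝ, (∫ τ₂ in Ioi (0:ℝ),
          (exp (τ₁ • Aᵀ) * M k * exp (τ₂ • A) * B) *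
          (exp (τ₁ • Aᵀ) * M k * exp (τ₂ • A) * B)ᵀ)
        = exp (τ₁ • Aᵀ) * (M k * P * M k) * exp (τ₁ • A) := by
      intro τ₁
      have h1 : (fun τ₂ : ℝ => (exp (τ₁ • Aᵀ) * M k * exp (τ₂ • A) * B) *
            (exp (τ₁ • Aᵀ) * M k * exp (τ₂ • A) * B)ᵀ)
          = fun τ₂ : ℝ => sandwichCLM (exp (τ₁ • Aᵀ) * M k) ((exp (τ₁ • Aᵀ) * M k)ᵀ)
              (exp (τ₂ • A) * (B * Bᵀ) * exp (τ₂ • Aᵀ)) := by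
        funext τ₂
        rw [sandwichCLM_apply]
        exact hre τ₁ τ₂
      erw [h1, (sandwichCLM _ _).integral_comp_comm hGint, sandwichCLM_apply, ← hPrep,
        hT1 τ₁]
      simp only [Matrix.mul_assoc]
    -- inner integrand is integrable (as a matrix-valued function)
    have hInnerInt : ∀ τ₁ : ℝ, IntegrableOn (fun τ₂ : ℝ =>
        (exp (τ₁ • Aᵀ) * M k * exp (τ₂ • A) * B) *
        (exp (τ₁ • Aᵀ) * M k * exp (τ₂ • A) * B)ᵀ) (Ioi 0) := by
      intro τ₁
      have h1 : (fun τ₂ : ℝ => (exp (τ₁ • Aᵀ) * M k * exp (τ₂ • A) * B) *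
            (exp (τ₁ • Aᵀ) * M k * exp (τ₂ • A) * B)ᵀ)
          = fun τ₂ : ℝ => sandwichCLM (exp (τ₁ • Aᵀ) * M k) ((exp (τ₁ • Aᵀ) * M k)ᵀ)
              (exp (τ₂ • A) * (B * Bᵀ) * exp (τ₂ • Aᵀ)) := by
        funext τ₂
        rw [sandwichCLM_apply]
        exact hre τ₁ τ₂
      rw [h1]
      exact (sandwichCLM _ _).integrable_comp hGint
    ext i j
    rw [Matrix.of_apply]
    have hout : (fun τ₁ : ℝ => ∫ τ₂ in Set.Ioi (0 : ℝ),
          ((exp (τ₁ • Aᵀ) * M k * exp (τ₂ • A) * B) *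
           (exp (τ₁ • Aᵀ) * M k * exp (τ₂ • A) * B)ᵀ) i j)
        = fun τ₁ : ℝ => entryCLM i j
            (exp (τ₁ • Aᵀ) * (M k * P * M k) * exp (τ₁ • A)) := by
      funext τ₁
      rw [entryCLM_apply, ← hInner τ₁]
      exact (entryCLM i j).integral_comp_comm (hInnerInt τ₁)
    erw [hout, (entryCLM i j).integral_comp_comm (integrable_sandwich hAd hATd _)]
    rfl
  calc Q = ∫ t in Ioi (0:ℝ), exp (t • Aᵀ) * X * exp (t • A) := hQrep
    _ = (∫ t in Ioi (0:ℝ), exp (t • Aᵀ) * (Cᵀ * C) * exp (t • A))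
        + ∑ k, ∫ t in Ioi (0:ℝ), exp (t • Aᵀ) * (M k * P * M k) * exp (t • A) := hLsplit
    _ = _ := by
        rw [hfirst]
        congr 1
        exact Finset.sum_congr rfl fun k _ => (hsecond k).symm

end Main
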